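/- Let X be a random variable with probability density f : [a,b] → ℝ₊ satisfying 0 ≤ m ≤ f(t) ≤ M for all t ∈ [a,b], cumulative distribution function F(x) = ∫ₐˣ f(t)dt, and expectation E(X) = ∫ₐᵇ t f(t)dt. Then for all h ∈ [0,1] and all x with a + h(b-a)/2 ≤ x ≤ b - h(b-a)/2, |(b-a){[F(x) - ((M+m)/2)(x - (a+b)/2)](1-h) + h/2} - (b - E(X))| ≤ (1/2)[((b-a)²/4)(h² + (h-1)²) + (x - (a+b)/2)²](M - m). -/

import Mathlib

open MeasureTheory intervalIntegral

lemma int_abs_sub (p q c : ℝ) (h1 : p ≤ c) (h2 : c ≤ q) :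
    (∫ t in p..q, |t - c|) = ((c - p)^2 + (q - c)^2) / 2 := by
  have i1 : IntervalIntegrable (fun t => |t - c|) volume p c :=
    ((continuous_id.sub continuous_const).abs).intervalIntegrable _ _
  have i2 : IntervalIntegrable (fun t => |t - c|) volume c q :=
    ((continuous_id.sub continuous_const).abs).intervalIntegrable _ _
  rw [← intervalIntegral.integral_add_adjacent_intervals i1 i2]
  have e1 : (∫ t in p..c, |t - c|) = ∫ t in p..c, (c - t) := by
    apply intervalIntegral.integral_congr
    intro t ht
    rw [Set.uIcc_of_le h1] at ht
    show |t - c| = c - t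
    rw [abs_of_nonpos (by linarith [ht.2])]; ring
  have e2 : (∫ t in c..q, |t - c|) = ∫ t in c..q, (t - c) := by
    apply intervalIntegral.integral_congr
    intro t ht
    rw [Set.uIcc_of_le h2] at ht
    show |t - c| = t - c
    exact abs_of_nonneg (by linarith [ht.1])
  rw [e1, e2,
    intervalIntegral.integral_sub intervalIntegrable_const
      (continuous_id'.intervalIntegrable _ _),
    intervalIntegral.integral_sub (continuous_id'.intervalIntegrable _ _)
      intervalIntegrable_const,
    intervalIntegral.integral_const, intervalIntegral.integral_const,
    integral_id, integral_id]
  simp only [smul_eq_mul]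
  ring

lemma kern_bound (p q c K δ : ℝ) (f : ℝ → ℝ) (hpq : p ≤ q) (hδ : 0 ≤ δ)
    (hb : ∀ t ∈ Set.Icc p q, |f t - K| ≤ δ) :
    |∫ t in p..q, (t - c) * (f t - K)| ≤ (∫ t in p..q, |t - c|) * δ := by
  have ig : IntervalIntegrable (fun t => |t - c| * δ) volume p q :=
    (((continuous_id.sub continuous_const).abs).mul continuous_const).intervalIntegrable _ _
  have hae : ∀ᵐ t ∂(volume.restrict (Set.uIoc p q)), ‖(t - c) * (f t - K)‖ ≤ |t - c| * δ := by
    filter_upwards [MeasureTheory.ae_restrict_mem measurableSet_uIoc] with t ht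
    have ht' : t ∈ Set.Icc p q := by
      rw [Set.uIoc_of_le hpq] at ht; exact ⟨le_of_lt ht.1, ht.2⟩
    rw [Real.norm_eq_abs, abs_mul]
    exact mul_le_mul_of_nonneg_left (hb t ht') (abs_nonneg _)
  have := intervalIntegral.norm_integral_le_abs_of_norm_le hae ig
  rw [Real.norm_eq_abs] at this
  refine this.trans ?_
  rw [intervalIntegral.integral_mul_const]
  exact le_of_eq (abs_of_nonneg (by
    apply mul_nonneg _ hδ
    apply intervalIntegral.integral_nonneg hpq
    intro t _; exact abs_nonneg _))

theorem stmt_16 (a b m M : ℝ) (f : ℝ → ℝ) (hab : a < b) (hmM : m < M) (hm : 0 ≤ m)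
    (hbound : ∀ t ∈ Set.Icc a b, m ≤ f t ∧ f t ≤ M)
    (hint : IntervalIntegrable f MeasureTheory.volume a b)
    (hprob : (∫ t in a..b, f t) = 1)
    (F : ℝ → ℝ) (hF : ∀ x, F x = ∫ t in a..x, f t)
    (E : ℝ) (hE : E = ∫ t in a..b, t * f t)
    (h x : ℝ) (hh : h ∈ Set.Icc (0:ℝ) 1)
    (hx1 : a + h * (b - a) / 2 ≤ x) (hx2 : x ≤ b - h * (b - a) / 2) :
    |(b - a) * ((F x - (M + m) / 2 * (x - (a + b) / 2)) * (1 - h) + h / 2) - (b - E)| ≤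
      1 / 2 * ((b - a) ^ 2 / 4 * (h ^ 2 + (h - 1) ^ 2) + (x - (a + b) / 2) ^ 2) * (M - m) := by
  obtain ⟨hh0, hh1⟩ := hh
  set c1 : ℝ := a + h * (b - a) / 2 with hc1
  set c2 : ℝ := b - h * (b - a) / 2 with hc2
  have hac1 : a ≤ c1 := by rw [hc1]; nlinarith
  have hc2b : c2 ≤ b := by rw [hc2]; nlinarith
  have hax : a ≤ x := le_trans hac1 hx1
  have hxb : x ≤ b := le_trans hx2 hc2b
  set K : ℝ := (M + m) / 2 with hK
  set δ : ℝ := (M - m) / 2 with hδ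
  have hδ0 : 0 ≤ δ := by rw [hδ]; linarith
  -- integrability on subintervals
  have hfax : IntervalIntegrable f volume a x := by
    apply hint.mono_set
    rw [Set.uIcc_of_le hax, Set.uIcc_of_le hab.le]
    exact Set.Icc_subset_Icc le_rfl hxb
  have hfxb : IntervalIntegrable f volume x b := by
    apply hint.mono_set
    rw [Set.uIcc_of_le hxb, Set.uIcc_of_le hab.le]
    exact Set.Icc_subset_Icc hax le_rfl
  have htfax : IntervalIntegrable (fun t => t * f t) volume a x :=
    hfax.continuousOn_mul continuous_id.continuousOn
  have htfxb : IntervalIntegrable (fun t => t * f t) volume x b :=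
    hfxb.continuousOn_mul continuous_id.continuousOn
  -- split identities
  have hFx : F x = ∫ t in a..x, f t := hF x
  have hsplitf : (∫ t in a..x, f t) + (∫ t in x..b, f t) = 1 := by
    rw [intervalIntegral.integral_add_adjacent_intervals hfax hfxb, hprob]
  have hsplittf : (∫ t in a..x, t * f t) + (∫ t in x..b, t * f t) = E := by
    rw [intervalIntegral.integral_add_adjacent_intervals htfax htfxb, hE]
  set A1 : ℝ := ∫ t in a..x, t * f t with hA1
  -- expand the two kernel integrals
  have hexp : ∀ (p q c : ℝ), IntervalIntegrable f volume p q →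
      IntervalIntegrable (fun t => t * f t) volume p q →
      (∫ t in p..q, (t - c) * (f t - K)) =
        (∫ t in p..q, t * f t) - c * (∫ t in p..q, f t)
          - K * ((q^2 - p^2)/2 - c * (q - p)) := by
    intro p q c hf1 hf2
    have e : ∀ t, (t - c) * (f t - K) = (t * f t - c * f t) - (K * t - K * c) := by
      intro t; ring
    simp only [e]
    rw [intervalIntegral.integral_sub (hf2.sub (hf1.const_mul c))
        ((by fun_prop : Continuous (fun t : ℝ => K * t - K * c)).intervalIntegrable _ _),
      intervalIntegral.integral_sub hf2 (hf1.const_mul c),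
      intervalIntegral.integral_sub ((by fun_prop : Continuous (fun t : ℝ => K * t)).intervalIntegrable _ _)
        intervalIntegrable_const,
      intervalIntegral.integral_const_mul, intervalIntegral.integral_const_mul,
      intervalIntegral.integral_const, integral_id]
    simp only [smul_eq_mul]
    ring
  have hI1 := hexp a x c1 hfax htfax
  have hI2 := hexp x b c2 hfxb htfxb
  -- abs bounds for the two pieces
  have hb1 : ∀ t ∈ Set.Icc a x, |f t - K| ≤ δ := by
    intro t ht
    have := hbound t ⟨ht.1, le_trans ht.2 hxb⟩
    rw [abs_le]; constructor <;> [rw [hδ, hK]; rw [hδ, hK]] <;> linarith [this.1, this.2]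
  have hb2 : ∀ t ∈ Set.Icc x b, |f t - K| ≤ δ := by
    intro t ht
    have := hbound t ⟨le_trans hax ht.1, ht.2⟩
    rw [abs_le]; constructor <;> [rw [hδ, hK]; rw [hδ, hK]] <;> linarith [this.1, this.2]
  have hB1 := kern_bound a x c1 K δ f hax hδ0 hb1
  have hB2 := kern_bound x b c2 K δ f hxb hδ0 hb2
  rw [int_abs_sub a x c1 hac1 hx1] at hB1
  rw [int_abs_sub x b c2 hx2 hc2b] at hB2
  -- the key identity
  have hkey : (b - a) * ((F x - K * (x - (a + b) / 2)) * (1 - h) + h / 2) - (b - E) =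
      (∫ t in a..x, (t - c1) * (f t - K)) + (∫ t in x..b, (t - c2) * (f t - K)) := by
    rw [hI1, hI2, hFx, hc1, hc2]
    have h2 : (∫ t in x..b, f t) = 1 - (∫ t in a..x, f t) := by linarith
    have h3 : (∫ t in x..b, t * f t) = E - A1 := by rw [hA1] at hsplittf ⊢; linarith
    rw [h2, h3, hA1]
    ring
  rw [hkey]
  calc |(∫ t in a..x, (t - c1) * (f t - K)) + (∫ t in x..b, (t - c2) * (f t - K))|
      ≤ |∫ t in a..x, (t - c1) * (f t - K)| + |∫ t in x..b, (t - c2) * (f t - K)| :=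
        abs_add_le _ _
    _ ≤ ((c1 - a)^2 + (x - c1)^2)/2 * δ + ((c2 - x)^2 + (b - c2)^2)/2 * δ := by linarith
    _ = 1 / 2 * ((b - a) ^ 2 / 4 * (h ^ 2 + (h - 1) ^ 2) + (x - (a + b) / 2) ^ 2) * (M - m) := by
        rw [hc1, hc2, hδ]; ring
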